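/- Let K be a compact smooth manifold without boundary, X a vector field on K (assigning to each p ∈ K a tangent vector X_p), α : K → ℝ a continuous nowhere-vanishing function, and u : K → ℝ a C¹ function. If du_p(X_p) + α(p)·u(p) = 0 for every p ∈ K, then u is identically zero. -/

import Mathlib

open Manifold

private lemma aux_mfderiv_max {E : Type*} [NormedAddCommGroup E] [NormedSpace ℝ E]
    [FiniteDimensional ℝ E]
    {H : Type*} [TopologicalSpace H] {I : ModelWithCorners ℝ E H}
    {K : Type*} [TopologicalSpace K] [ChartedSpace H K] [IsManifold I (⊤ : ℕ∞) K]
    [BoundarylessManifold I K]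
    (u : K → ℝ) (p : K) (hu : MDifferentiableAt I 𝓘(ℝ, ℝ) u p)
    (hmax : ∀ q : K, u q ≤ u p) :
    mfderiv I 𝓘(ℝ, ℝ) u p = 0 := by
  set e := extChartAt I p with he
  have hmem : Set.range I ∈ nhds (e p) :=
    range_mem_nhds_isInteriorPoint (BoundarylessManifold.isInteriorPoint (I := I))
  have h1 : DifferentiableWithinAt ℝ (writtenInExtChartAt I 𝓘(ℝ, ℝ) p u) (Set.range I) (e p) :=
    hu.differentiableWithinAt_writtenInExtChartAt
  have h2 : DifferentiableAt ℝ (writtenInExtChartAt I 𝓘(ℝ, ℝ) p u) (e p) :=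
    h1.differentiableAt hmem
  have hval : ∀ y : E, writtenInExtChartAt I 𝓘(ℝ, ℝ) p u y = u (e.symm y) := by
    intro y
    simp [writtenInExtChartAt, he, chartAt_self_eq]
  have hlm : IsLocalMax (writtenInExtChartAt I 𝓘(ℝ, ℝ) p u) (e p) := by
    apply Filter.Eventually.of_forall
    intro y
    rw [hval y, hval (e p), extChartAt_to_inv]
    exact hmax _
  have hf0 : fderiv ℝ (writtenInExtChartAt I 𝓘(ℝ, ℝ) p u) (e p) = 0 :=
    hlm.fderiv_eq_zero
  have hfd : HasFDerivAt (writtenInExtChartAt I 𝓘(ℝ, ℝ) p u) (0 : E →L[ℝ] ℝ) (e p) := by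
    rw [← hf0]; exact h2.hasFDerivAt
  have hM : HasMFDerivAt I 𝓘(ℝ, ℝ) u p 0 :=
    ⟨hu.continuousAt, hfd.hasFDerivWithinAt⟩
  exact hM.mfderiv

/-- Injectivity part of Lemma 6.2: on a compact boundaryless manifold, if
`∂_X u + α·u = 0` with `α` continuous and nowhere vanishing, then `u ≡ 0`. -/
theorem stmt6 {E : Type*} [NormedAddCommGroup E] [NormedSpace ℝ E] [FiniteDimensional ℝ E]
    {H : Type*} [TopologicalSpace H] {I : ModelWithCorners ℝ E H}
    {K : Type*} [TopologicalSpace K] [ChartedSpace H K] [IsManifold I (⊤ : ℕ∞) K]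
    [CompactSpace K] [BoundarylessManifold I K]
    (X : ∀ p : K, TangentSpace I p)
    (α : K → ℝ) (hα : Continuous α) (hα0 : ∀ p : K, α p ≠ 0)
    (u : K → ℝ) (hu : ContMDiff I 𝓘(ℝ, ℝ) 1 u)
    (heq : ∀ p : K, (show ℝ from mfderiv I 𝓘(ℝ, ℝ) u p (X p)) + α p * u p = 0) :
    ∀ p : K, u p = 0 := by
  intro p
  cases isEmpty_or_nonempty K with
  | inl h => exact h.elim p
  | inr h =>
    have hucont : Continuous u := hu.continuous
    obtain ⟨pmax, -, hmax⟩ := isCompact_univ.exists_isMaxOn Set.univ_nonempty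
      (hucont.continuousOn)
    obtain ⟨pmin, -, hmin⟩ := isCompact_univ.exists_isMinOn Set.univ_nonempty
      (hucont.continuousOn)
    have hzero : ∀ q : K, (∀ r : K, u r ≤ u q) → u q = 0 := by
      intro q hq
      have hd : mfderiv I 𝓘(ℝ, ℝ) u q = 0 :=
        aux_mfderiv_max u q ((hu.mdifferentiable one_ne_zero) q) hq
      have := heq q
      rw [hd] at this
      change (0:ℝ) + α q * u q = 0 at this
      simp at this
      rcases this with h | h
      · exact absurd h (hα0 q)
      · exact h
    have humax : u pmax = 0 := hzero pmax (fun r => hmax (Set.mem_univ r))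
    have humin : u pmin = 0 := by
      have hq : ∀ r : K, (-u) r ≤ (-u) pmin := fun r => by
        simpa using hmin (Set.mem_univ r)
      have hd : mfderiv I 𝓘(ℝ, ℝ) (-u) pmin = 0 :=
        aux_mfderiv_max (-u) pmin ((hu.mdifferentiable one_ne_zero) pmin).neg hq
      have hd' : mfderiv I 𝓘(ℝ, ℝ) u pmin = 0 := by
        have hneg := mfderiv_neg (I := I) (f := u) (x := pmin)
        rw [hd] at hneg
        exact neg_eq_zero.mp hneg.symm
      have := heq pmin
      rw [hd'] at this
      change (0:ℝ) + α pmin * u pmin = 0 at this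
      simp at this
      rcases this with h | h
      · exact absurd h (hα0 pmin)
      · exact h
    have h1 : u p ≤ 0 := humax ▸ hmax (Set.mem_univ p)
    have h2 : 0 ≤ u p := humin ▸ hmin (Set.mem_univ p)
    linarith
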